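/- For distinct r-dimensional subspaces L₁, L₂ of V with dim(L₁∩L₂) = r-1 (equivalently dim(L₁+L₂) = r+1), and any v₁∧...∧vᵣ-type decomposable vectors: every subspace L₃ with L₁∩L₂ ⊆ L₃ ⊆ L₁+L₂, dim L₃ = r, has Plücker coordinate vector lying in the span of those of L₁ and L₂; i.e. ω(L₃) ∈ ⟨ω(L₁), ω(L₂)⟩ ⊆ Λ^r V, where ω(L) denotes a wedge of a basis of L. -/

import Mathlib

open Module Classical

/-- The Plücker vector `ω(L) = l₁ ∧ ... ∧ lᵣ` of an `r`-dimensional subspace `L`, for a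
choice of basis `l₁, ..., lᵣ` of `L` (well defined up to a nonzero scalar). -/
noncomputable def plueckerVec {k V : Type*} [Field k] [AddCommGroup V] [Module k V]
    (r : ℕ) (L : Submodule k V) : ExteriorAlgebra k V :=
  if h : Nonempty (Basis (Fin r) k ↥L) then
    ExteriorAlgebra.ιMulti k r (fun i => (h.some i : V)) else 0

/-- Any alternating map (valued in any module) equals the determinant w.r.t. a basis
times its value on the basis. -/
lemma alternating_eq_det_smul {k M N ι : Type*} [Field k] [AddCommGroup M] [Module k M]
    [AddCommGroup N] [Module k N] [Fintype ι] [DecidableEq ι]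
    (b : Basis ι k M) (f : M [⋀^ι]→ₗ[k] N) (v : ι → M) :
    f v = b.det v • f b := by
  have hfe : f = b.det.smulRight (f b) := by
    refine Basis.ext_alternating b fun i hi => ?_
    let σ : Equiv.Perm ι := Equiv.ofBijective i (Finite.injective_iff_bijective.1 hi)
    change f (b ∘ σ) = b.det.smulRight (f b) (b ∘ σ)
    rw [AlternatingMap.smulRight_apply, AlternatingMap.map_perm, AlternatingMap.map_perm,
      Basis.det_self]
    rcases Int.units_eq_one_or (Equiv.Perm.sign σ) with h | h <;> simp [h]
  conv_lhs => rw [hfe]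
  rfl

/-- If every member of the family `w` lies in `L`, then `w₁ ∧ ... ∧ wᵣ` is a scalar multiple
of the wedge of a basis of `L`. -/
lemma iMulti_mem_span_of_basis {k V : Type*} [Field k] [AddCommGroup V] [Module k V]
    {r : ℕ} {L : Submodule k V} (b : Basis (Fin r) k ↥L) (w : Fin r → V)
    (hw : ∀ i, w i ∈ L) :
    ExteriorAlgebra.ιMulti k r w ∈
      Submodule.span k {ExteriorAlgebra.ιMulti k r (fun i => (b i : V))} := by
  set F : ↥L [⋀^Fin r]→ₗ[k] ExteriorAlgebra k V :=
    (ExteriorAlgebra.ιMulti k r).compLinearMap L.subtype with hF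
  have h1 : ExteriorAlgebra.ιMulti k r w = F (fun i => ⟨w i, hw i⟩) := rfl
  have h2 : F b = ExteriorAlgebra.ιMulti k r (fun i => (b i : V)) := rfl
  rw [h1, alternating_eq_det_smul b F, h2]
  exact Submodule.smul_mem _ _ (Submodule.mem_span_singleton_self _)

/-- For distinct `r`-dimensional subspaces `L₁, L₂` of `V` with `dim (L₁∩L₂) = r-1`
(equivalently `dim (L₁+L₂) = r+1`), every subspace `L₃` with `L₁∩L₂ ⊆ L₃ ⊆ L₁+L₂` and
`dim L₃ = r` has its Plücker vector in the span of those of `L₁` and `L₂`: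
`ω(L₃) ∈ ⟨ω(L₁), ω(L₂)⟩ ⊆ Λ^r V`. -/
theorem pluecker_vec_mem_span {k V : Type*} [Field k] [AddCommGroup V] [Module k V]
    [FiniteDimensional k V] (r : ℕ) (hr : 1 ≤ r) (L₁ L₂ L₃ : Submodule k V)
    (h12 : L₁ ≠ L₂) (hr1 : finrank k L₁ = r) (hr2 : finrank k L₂ = r)
    (hinf : finrank k ↥(L₁ ⊓ L₂) = r - 1)
    (h1 : L₁ ⊓ L₂ ≤ L₃) (h2 : L₃ ≤ L₁ ⊔ L₂) (hr3 : finrank k L₃ = r) :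
    plueckerVec r L₃ ∈ Submodule.span k {plueckerVec r L₁, plueckerVec r L₂} := by
  obtain ⟨s, rfl⟩ : ∃ s, r = s + 1 := ⟨r - 1, (Nat.succ_pred_eq_of_pos hr).symm⟩
  set M : Submodule k V := L₁ ⊓ L₂ with hM
  have hMfr : finrank k ↥M = s := by simpa using hinf
  obtain ⟨e⟩ : Nonempty (Basis (Fin s) k ↥M) := ⟨Module.finBasisOfFinrankEq k ↥M hMfr⟩
  set e' : Fin s → V := fun i => (e i : V) with he'
  have he'li : LinearIndependent k e' :=
    e.linearIndependent.map' M.subtype (Submodule.ker_subtype M)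
  have he'span : Submodule.span k (Set.range e') = M := by
    have hre : Set.range e' = M.subtype '' Set.range e := by
      rw [← Set.range_comp]; rfl
    rw [hre, ← Submodule.map_span, e.span_eq, Submodule.map_top, Submodule.range_subtype]
  -- pick vᵢ ∈ Lᵢ \ M
  have hpick : ∀ L : Submodule k V, finrank k ↥L = s + 1 → ∃ v ∈ L, v ∉ M := by
    intro L hL
    apply SetLike.not_le_iff_exists.1
    intro hle
    have := Submodule.finrank_mono hle
    omega
  obtain ⟨v₁, hv₁L, hv₁M⟩ := hpick L₁ hr1
  obtain ⟨v₂, hv₂L, hv₂M⟩ := hpick L₂ hr2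
  obtain ⟨v₃, hv₃L, hv₃M⟩ := hpick L₃ hr3
  -- L = M ⊔ span {v}
  have hsup : ∀ (L : Submodule k V) (v : V), M ≤ L → v ∈ L → v ∉ M →
      finrank k ↥L = s + 1 → M ⊔ Submodule.span k {v} = L := by
    intro L v hML hvL hvM hL
    have hle : M ⊔ Submodule.span k {v} ≤ L :=
      sup_le hML ((Submodule.span_singleton_le_iff_mem v L).2 hvL)
    refine Submodule.eq_of_le_of_finrank_le hle ?_
    have hvmem : v ∈ M ⊔ Submodule.span k {v} :=
      Submodule.mem_sup_right (Submodule.mem_span_singleton_self v)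
    have hlt : M < M ⊔ Submodule.span k {v} :=
      lt_of_le_of_ne le_sup_left (fun h => hvM (h ▸ hvmem))
    have := Submodule.finrank_lt_finrank_of_lt hlt
    omega
  have hL1 : M ⊔ Submodule.span k {v₁} = L₁ := hsup L₁ v₁ inf_le_left hv₁L hv₁M hr1
  have hL2 : M ⊔ Submodule.span k {v₂} = L₂ := hsup L₂ v₂ inf_le_right hv₂L hv₂M hr2
  -- decompose v₃
  have hv₃sup : v₃ ∈ (M ⊔ Submodule.span k {v₁}) ⊔ Submodule.span k {v₂} := by
    have hx : v₃ ∈ L₁ ⊔ L₂ := h2 hv₃L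
    rw [← hL1, ← hL2] at hx
    have heq : (M ⊔ Submodule.span k {v₁}) ⊔ (M ⊔ Submodule.span k {v₂}) =
        (M ⊔ Submodule.span k {v₁}) ⊔ Submodule.span k {v₂} := by
      rw [← sup_assoc, sup_right_comm M (Submodule.span k {v₁}) M, sup_idem]
    rwa [heq] at hx
  obtain ⟨y, hy, z2, hz2, hyz⟩ := Submodule.mem_sup.1 hv₃sup
  obtain ⟨m, hm, z1, hz1, hmz⟩ := Submodule.mem_sup.1 hy
  obtain ⟨a, rfl⟩ := Submodule.mem_span_singleton.1 hz1
  obtain ⟨c, rfl⟩ := Submodule.mem_span_singleton.1 hz2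
  have hv₃eq : v₃ = m + a • v₁ + c • v₂ := by rw [← hyz, ← hmz]
  set A : V [⋀^Fin (s + 1)]→ₗ[k] ExteriorAlgebra k V := ExteriorAlgebra.ιMulti k (s + 1)
    with hA
  have hzero : A (Fin.snoc e' m) = 0 := by
    apply AlternatingMap.map_linearDependent
    intro hli
    exact (linearIndependent_fin_snoc.1 hli).2 (he'span.symm ▸ hm)
  have hkey : A (Fin.snoc e' v₃) = a • A (Fin.snoc e' v₁) + c • A (Fin.snoc e' v₂) := by
    have h3 : A (Fin.snoc e' v₃)
        = A.toMultilinearMap (Fin.snoc e' (m + a • v₁ + c • v₂)) := by rw [hv₃eq]; rfl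
    rw [h3, MultilinearMap.snoc_add, MultilinearMap.snoc_add, MultilinearMap.snoc_smul,
      MultilinearMap.snoc_smul]
    have hz : A.toMultilinearMap (Fin.snoc e' m) = 0 := hzero
    rw [hz, zero_add]; rfl
  -- membership of snoc families in L₁, L₂, L₃
  have hmem : ∀ (L : Submodule k V) (v : V), M ≤ L → v ∈ L → ∀ i, (Fin.snoc e' v : Fin (s + 1) → V) i ∈ L := by
    intro L v hML hvL i
    refine Fin.lastCases ?_ (fun j => ?_) i
    · simpa using hvL
    · simpa using hML (e j).2
  -- ιMulti (snoc e' vᵢ) is a multiple of plueckerVec (s+1) Lᵢ, i = 1, 2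
  have hpl : ∀ (L : Submodule k V) (v : V), M ≤ L → v ∈ L → finrank k ↥L = s + 1 →
      A (Fin.snoc e' v) ∈ Submodule.span k {plueckerVec (s + 1) L} := by
    intro L v hML hvL hL
    have hne : Nonempty (Basis (Fin (s + 1)) k ↥L) := ⟨Module.finBasisOfFinrankEq k ↥L hL⟩
    rw [plueckerVec, dif_pos hne]
    exact iMulti_mem_span_of_basis hne.some _ (hmem L v hML hvL)
  have hpl1 := hpl L₁ v₁ inf_le_left hv₁L hr1
  have hpl2 := hpl L₂ v₂ inf_le_right hv₂L hr2
  -- a basis of L₃ realizing snoc e' v₃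
  have hmem3 := hmem L₃ v₃ h1 hv₃L
  set G : Fin (s + 1) → ↥L₃ := fun i => ⟨(Fin.snoc e' v₃ : Fin (s + 1) → V) i, hmem3 i⟩ with hG
  have hsnocli : LinearIndependent k (Fin.snoc e' v₃ : Fin (s + 1) → V) := by
    rw [linearIndependent_fin_snoc]
    exact ⟨he'li, fun h => hv₃M (he'span ▸ h)⟩
  have hGli : LinearIndependent k G := LinearIndependent.of_comp L₃.subtype hsnocli
  have hcard : Fintype.card (Fin (s + 1)) = finrank k ↥L₃ := by simp [hr3]
  set B : Basis (Fin (s + 1)) k ↥L₃ := basisOfLinearIndependentOfCardEqFinrank hGli hcard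
    with hB
  have hBcoe : (fun i => (B i : V)) = Fin.snoc e' v₃ := by
    funext i
    rw [hB, coe_basisOfLinearIndependentOfCardEqFinrank]
  -- conclude
  have hne3 : Nonempty (Basis (Fin (s + 1)) k ↥L₃) := ⟨B⟩
  have hω3 : plueckerVec (s + 1) L₃
      = ExteriorAlgebra.ιMulti k (s + 1) (fun i => ((hne3.some i : ↥L₃) : V)) := by
    rw [plueckerVec, dif_pos hne3]
  rw [hω3]
  have hmemspan : ExteriorAlgebra.ιMulti k (s + 1) (fun i => ((hne3.some i : ↥L₃) : V)) ∈
      Submodule.span k {A (Fin.snoc e' v₃)} := by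
    have := iMulti_mem_span_of_basis B (fun i => ((hne3.some i : ↥L₃) : V))
      (fun i => (hne3.some i).2)
    rwa [hBcoe] at this
  have hfinal : A (Fin.snoc e' v₃) ∈
      Submodule.span k {plueckerVec (s + 1) L₁, plueckerVec (s + 1) L₂} := by
    rw [hkey]
    refine Submodule.add_mem _ (Submodule.smul_mem _ _ ?_) (Submodule.smul_mem _ _ ?_)
    · exact Submodule.span_mono (Set.singleton_subset_iff.2 (by simp)) hpl1
    · exact Submodule.span_mono (Set.singleton_subset_iff.2 (by simp)) hpl2
  exact Submodule.span_le.2 (Set.singleton_subset_iff.2 hfinal) hmemspan
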